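/- Let M ⊆ S_k^n be a normalized (⊓,⊔)-closed set, and for each i let J_i = {x ∈ J(M) : supp x̄ = {i}}. Then for distinct x, y ∈ J(M), the pair {x, y} is minimally inconsistent if and only if x and y belong to the same part J_i for some i ∈ {1,…,n}. -/

import Mathlib

/-- The partial order on `S_k = {0,1,…,k}`: `a ⪯ b` iff `a = 0` or `a = b`. -/
def pre {k : ℕ} (a b : Fin (k + 1)) : Prop := a = 0 ∨ a = b

instance {k : ℕ} (a b : Fin (k + 1)) : Decidable (pre a b) :=
  decidable_of_iff (a = 0 ∨ a = b) Iff.rfl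

/-- The componentwise order `⪯` on `S_k^n`. -/
def preV {k n : ℕ} (x y : Fin n → Fin (k + 1)) : Prop := ∀ i, pre (x i) (y i)

/-- The operation `⊓` on `S_k^n`. -/
def sqcap {k n : ℕ} (x y : Fin n → Fin (k + 1)) : Fin n → Fin (k + 1) :=
  fun i => if pre (x i) (y i) ∨ pre (y i) (x i) then min (x i) (y i) else 0

/-- The operation `⊔` on `S_k^n`. -/
def sqcup {k n : ℕ} (x y : Fin n → Fin (k + 1)) : Fin n → Fin (k + 1) :=
  fun i => if pre (x i) (y i) ∨ pre (y i) (x i) then max (x i) (y i) else 0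

/-- A `(⊓,⊔)`-closed subset of `S_k^n`. -/
def closedSet {k n : ℕ} (M : Set (Fin n → Fin (k + 1))) : Prop :=
  M.Nonempty ∧ ∀ x ∈ M, ∀ y ∈ M, sqcap x y ∈ M ∧ sqcup x y ∈ M

/-- Strict version of `⪯`. -/
def strictPreV {k n : ℕ} (x y : Fin n → Fin (k + 1)) : Prop := preV x y ∧ x ≠ y

/-- `m` is the minimum element of `M` with respect to `⪯`. -/
def isMinOf {k n : ℕ} (M : Set (Fin n → Fin (k + 1))) (m : Fin n → Fin (k + 1)) : Prop :=
  m ∈ M ∧ ∀ x ∈ M, preV m x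

/-- `u` is the least upper bound of `S` inside `(M, ⪯)`. -/
def isLUBof {k n : ℕ} (M S : Set (Fin n → Fin (k + 1))) (u : Fin n → Fin (k + 1)) : Prop :=
  u ∈ M ∧ (∀ s ∈ S, preV s u) ∧ ∀ w ∈ M, (∀ s ∈ S, preV s w) → preV u w

/-- `x` is a join-irreducible element of `M`. -/
def joinIrr {k n : ℕ} (M : Set (Fin n → Fin (k + 1))) (x : Fin n → Fin (k + 1)) : Prop :=
  x ∈ M ∧ ¬ isMinOf M x ∧ ¬ isLUBof M {y | y ∈ M ∧ strictPreV y x} x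

/-- A `(⊓,⊔)`-closed set is simple if its minimum element is the all-zero vector. -/
def simpleSet {k n : ℕ} (M : Set (Fin n → Fin (k + 1))) : Prop :=
  isMinOf M (fun _ => 0)

/-- `y` is a lower cover of `x` in `M`. -/
def lowerCover {k n : ℕ} (M : Set (Fin n → Fin (k + 1)))
    (y x : Fin n → Fin (k + 1)) : Prop :=
  y ∈ M ∧ strictPreV y x ∧ ¬ ∃ z ∈ M, strictPreV y z ∧ strictPreV z x

/-- `d` is the differential of `x` in `M` (with respect to some lower cover of `x`). -/
def isDiff {k n : ℕ} (M : Set (Fin n → Fin (k + 1)))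
    (x d : Fin n → Fin (k + 1)) : Prop :=
  ∃ y, lowerCover M y x ∧ ∀ i, d i = if x i ≠ 0 ∧ y i = 0 then x i else 0

/-- The support of `x ∈ S_k^n`. -/
def supp {k n : ℕ} (x : Fin n → Fin (k + 1)) : Set (Fin n) := {i | x i ≠ 0}

/-- `x ⌣ y`: `x` and `y` have no common upper bound in `S_k^n`. -/
def incons {k n : ℕ} (x y : Fin n → Fin (k + 1)) : Prop :=
  ∃ i, x i ≠ 0 ∧ y i ≠ 0 ∧ x i ≠ y i

/-- A simple `(⊓,⊔)`-closed set is normalized if the differential of every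
join-irreducible element has exactly one nonzero component. -/
def normalizedSet {k n : ℕ} (M : Set (Fin n → Fin (k + 1))) : Prop :=
  simpleSet M ∧ ∀ x, joinIrr M x → ∃ d, isDiff M x d ∧ ∃! i, d i ≠ 0

/-- `J_i`: the set of join-irreducible elements of `M` whose differential has
support `{i}`. -/
def Ji {k n : ℕ} (M : Set (Fin n → Fin (k + 1))) (i : Fin n) :
    Set (Fin n → Fin (k + 1)) :=
  {x | joinIrr M x ∧ ∃ d, isDiff M x d ∧ supp d = {i}}

/-- A pair `{x, y}` of distinct join-irreducibles is minimally inconsistent: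
`x ⌣ y` and no strictly smaller inconsistent pair of join-irreducibles exists
below it. -/
def minInc {k n : ℕ} (M : Set (Fin n → Fin (k + 1)))
    (x y : Fin n → Fin (k + 1)) : Prop :=
  incons x y ∧ ∀ x' y', joinIrr M x' → joinIrr M y' →
    preV x' x → preV y' y → incons x' y' → x' = x ∧ y' = y


section EP0Helpers

variable {k n : ℕ}

lemma pre_refl (a : Fin (k + 1)) : pre a a := Or.inr rfl

lemma preV_refl (x : Fin n → Fin (k + 1)) : preV x x := fun _ => pre_refl _

lemma preV_trans {x y z : Fin n → Fin (k + 1)} (h1 : preV x y) (h2 : preV y z) :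
    preV x z := by
  intro i
  rcases h1 i with h | h
  · exact Or.inl h
  · rw [h]; exact h2 i

lemma sqcap_apply (x y : Fin n → Fin (k + 1)) (l : Fin n) :
    sqcap x y l = if x l = y l then x l else 0 := by
  unfold sqcap
  by_cases h : x l = y l
  · rw [if_pos h, if_pos (show pre (x l) (y l) ∨ pre (y l) (x l) from Or.inl (Or.inr h)), h, min_self]
  · rw [if_neg h]
    by_cases hc : pre (x l) (y l) ∨ pre (y l) (x l)
    · rw [if_pos hc]
      rcases hc with (h0 | h0) | (h0 | h0)
      · rw [h0]; exact min_eq_left (Fin.zero_le _)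
      · exact absurd h0 h
      · rw [h0]; exact min_eq_right (Fin.zero_le _)
      · exact absurd h0.symm h
    · rw [if_neg hc]

lemma sqcup_apply (x y : Fin n → Fin (k + 1)) (l : Fin n) :
    sqcup x y l = if x l = 0 then y l else if y l = 0 then x l
      else if x l = y l then x l else 0 := by
  unfold sqcup
  by_cases h1 : x l = 0
  · rw [if_pos h1, if_pos (show pre (x l) (y l) ∨ pre (y l) (x l) from Or.inl (Or.inl h1)), h1]
    exact max_eq_right (Fin.zero_le _)
  · rw [if_neg h1]
    by_cases h2 : y l = 0
    · rw [if_pos h2, if_pos (show pre (x l) (y l) ∨ pre (y l) (x l) from Or.inr (Or.inl h2)), h2]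
      exact max_eq_left (Fin.zero_le _)
    · rw [if_neg h2]
      by_cases h3 : x l = y l
      · rw [if_pos h3, if_pos (show pre (x l) (y l) ∨ pre (y l) (x l) from Or.inl (Or.inr h3)), h3, max_self]
      · rw [if_neg h3, if_neg]
        rintro ((h | h) | (h | h))
        · exact h1 h
        · exact h3 h
        · exact h2 h
        · exact h3 h.symm

lemma sqcap_preV_left (x y : Fin n → Fin (k + 1)) : preV (sqcap x y) x := by
  intro l; rw [sqcap_apply]
  by_cases h : x l = y l
  · rw [if_pos h]; exact Or.inr rfl
  · rw [if_neg h]; exact Or.inl rfl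

lemma sqcap_preV_right (x y : Fin n → Fin (k + 1)) : preV (sqcap x y) y := by
  intro l; rw [sqcap_apply]
  by_cases h : x l = y l
  · rw [if_pos h]; exact Or.inr h
  · rw [if_neg h]; exact Or.inl rfl

lemma preV_sqcap {z x y : Fin n → Fin (k + 1)} (hx : preV z x) (hy : preV z y) :
    preV z (sqcap x y) := by
  intro l
  rcases hx l with h1 | h1
  · exact Or.inl h1
  rcases hy l with h2 | h2
  · exact Or.inl h2
  right
  rw [sqcap_apply, if_pos (h1.symm.trans h2)]
  exact h1

lemma sqcap_eq_left {x w : Fin n → Fin (k + 1)} (h : sqcap x w = x) : preV x w := by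
  intro l
  by_cases h0 : x l = 0
  · exact Or.inl h0
  have hl := congrFun h l
  rw [sqcap_apply] at hl
  by_cases he : x l = w l
  · exact Or.inr he
  · rw [if_neg he] at hl
    exact absurd hl.symm h0

lemma sqcup_preV {a b m : Fin n → Fin (k + 1)} (ha : preV a m) (hb : preV b m) :
    preV (sqcup a b) m := by
  intro l; rw [sqcup_apply]
  by_cases h1 : a l = 0
  · rw [if_pos h1]; exact hb l
  · rw [if_neg h1]
    by_cases h2 : b l = 0
    · rw [if_pos h2]; exact ha l
    · rw [if_neg h2]
      by_cases h3 : a l = b l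
      · rw [if_pos h3]; exact ha l
      · rw [if_neg h3]; exact Or.inl rfl

lemma sqcup_compat {a b m : Fin n → Fin (k + 1)} (ha : preV a m) (hb : preV b m)
    {l : Fin n} (h1 : a l ≠ 0) (h2 : b l ≠ 0) : a l = b l := by
  rcases ha l with h | h
  · exact absurd h h1
  rcases hb l with h' | h'
  · exact absurd h' h2
  rw [h, h']

lemma preV_sqcup_left {a b m : Fin n → Fin (k + 1)} (ha : preV a m) (hb : preV b m) :
    preV a (sqcup a b) := by
  intro l; rw [sqcup_apply]
  by_cases h1 : a l = 0
  · exact Or.inl h1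
  rw [if_neg h1]
  by_cases h2 : b l = 0
  · rw [if_pos h2]; exact Or.inr rfl
  · rw [if_neg h2, if_pos (sqcup_compat ha hb h1 h2)]
    exact Or.inr rfl

lemma preV_sqcup_right {a b m : Fin n → Fin (k + 1)} (ha : preV a m) (hb : preV b m) :
    preV b (sqcup a b) := by
  intro l; rw [sqcup_apply]
  by_cases h2 : b l = 0
  · exact Or.inl h2
  by_cases h1 : a l = 0
  · rw [if_pos h1]; exact Or.inr rfl
  · rw [if_neg h1, if_neg h2, if_pos (sqcup_compat ha hb h1 h2)]
    exact Or.inr (sqcup_compat ha hb h1 h2).symm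

/-- the number of nonzero coordinates -/
def mu {k n : ℕ} (x : Fin n → Fin (k + 1)) : ℕ :=
  (Finset.univ.filter fun l => x l ≠ 0).card

lemma mu_pos {m : Fin n → Fin (k + 1)} {j : Fin n} (h : m j ≠ 0) : 0 < mu m :=
  Finset.card_pos.mpr ⟨j, Finset.mem_filter.mpr ⟨Finset.mem_univ _, h⟩⟩

lemma mu_subset {z m : Fin n → Fin (k + 1)} (h : preV z m) :
    (Finset.univ.filter fun l => z l ≠ 0) ⊆ (Finset.univ.filter fun l => m l ≠ 0) := by
  intro l hl
  rw [Finset.mem_filter] at hl ⊢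
  refine ⟨Finset.mem_univ _, ?_⟩
  rcases h l with h0 | h0
  · exact absurd h0 hl.2
  · rw [← h0]; exact hl.2

lemma mu_le {z m : Fin n → Fin (k + 1)} (h : preV z m) : mu z ≤ mu m :=
  Finset.card_le_card (mu_subset h)

lemma mu_lt {z m : Fin n → Fin (k + 1)} (h : strictPreV z m) : mu z < mu m := by
  apply Finset.card_lt_card
  rw [Finset.ssubset_iff_of_subset (mu_subset h.1)]
  obtain ⟨l, hl⟩ := Function.ne_iff.mp h.2
  have hz0 : z l = 0 := by
    rcases h.1 l with h0 | h0
    · exact h0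
    · exact absurd h0 hl
  have hm : m l ≠ 0 := fun h0 => hl (by rw [hz0, h0])
  exact ⟨l, Finset.mem_filter.mpr ⟨Finset.mem_univ _, hm⟩,
    fun hc => (Finset.mem_filter.mp hc).2 hz0⟩

lemma fold_mem {M : Set (Fin n → Fin (k + 1))} (hM : closedSet M)
    (h0 : (fun _ => 0) ∈ M) :
    ∀ L : List (Fin n → Fin (k + 1)), (∀ z ∈ L, z ∈ M) →
      L.foldr sqcup (fun _ => 0) ∈ M := by
  intro L
  induction L with
  | nil => intro _; exact h0
  | cons a t ih =>
    intro h
    exact (hM.2 a (h a List.mem_cons_self) _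
      (ih fun z hz => h z (List.mem_cons_of_mem a hz))).2

lemma fold_preV {m : Fin n → Fin (k + 1)} :
    ∀ L : List (Fin n → Fin (k + 1)), (∀ z ∈ L, preV z m) →
      preV (L.foldr sqcup (fun _ => 0)) m := by
  intro L
  induction L with
  | nil => intro _ l; exact Or.inl rfl
  | cons a t ih =>
    intro h
    exact sqcup_preV (h a List.mem_cons_self)
      (ih fun z hz => h z (List.mem_cons_of_mem a hz))

lemma fold_le {m : Fin n → Fin (k + 1)} :
    ∀ L : List (Fin n → Fin (k + 1)), (∀ z ∈ L, preV z m) →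
      ∀ z ∈ L, preV z (L.foldr sqcup (fun _ => 0)) := by
  intro L
  induction L with
  | nil => intro _ z hz; exact absurd hz List.not_mem_nil
  | cons a t ih =>
    intro h z hz
    have ht : ∀ z ∈ t, preV z m := fun z hz => h z (List.mem_cons_of_mem a hz)
    have hw : preV (t.foldr sqcup (fun _ => 0)) m := fold_preV t ht
    rcases List.mem_cons.mp hz with rfl | hz'
    · exact preV_sqcup_left (h z List.mem_cons_self) hw
    · exact preV_trans (ih ht z hz')
        (preV_sqcup_right (h a List.mem_cons_self) hw)

lemma fold_zero {j : Fin n} :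
    ∀ L : List (Fin n → Fin (k + 1)), (∀ z ∈ L, z j = 0) →
      (L.foldr sqcup (fun _ => 0)) j = 0 := by
  intro L
  induction L with
  | nil => intro _; rfl
  | cons a t ih =>
    intro h
    show sqcup a (t.foldr sqcup (fun _ => 0)) j = 0
    rw [sqcup_apply, if_pos (h a List.mem_cons_self)]
    exact ih fun z hz => h z (List.mem_cons_of_mem a hz)

lemma exists_ji {M : Set (Fin n → Fin (k + 1))} (hM : closedSet M) (hs : simpleSet M) :
    ∀ N : ℕ, ∀ m ∈ M, mu m ≤ N → ∀ j, m j ≠ 0 →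
      ∃ p, joinIrr M p ∧ preV p m ∧ p j = m j := by
  intro N
  induction N with
  | zero =>
    intro m _ hmu j hj
    have := mu_pos hj
    omega
  | succ N ih =>
    intro m hm hmu j hj
    by_cases hji : joinIrr M m
    · exact ⟨m, hji, preV_refl m, rfl⟩
    have hmin : ¬ isMinOf M m := by
      intro h
      rcases h.2 _ hs.1 j with h0 | h0
      · exact hj h0
      · exact hj h0
    have hlub : isLUBof M {y | y ∈ M ∧ strictPreV y m} m := by
      by_contra h
      exact hji ⟨hm, hmin, h⟩
    obtain ⟨z, hzM, hz, hzj⟩ : ∃ z, z ∈ M ∧ strictPreV z m ∧ z j = m j := by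
      by_contra hno
      push_neg at hno
      classical
      set L := (Finset.univ.filter fun z => z ∈ M ∧ strictPreV z m).toList with hL
      have hmemL : ∀ z ∈ L, z ∈ M ∧ strictPreV z m := by
        intro z hz
        rw [hL, Finset.mem_toList, Finset.mem_filter] at hz
        exact hz.2
      have hwM : L.foldr sqcup (fun _ => 0) ∈ M :=
        fold_mem hM hs.1 L fun z hz => (hmemL z hz).1
      have hub : ∀ s ∈ {y | y ∈ M ∧ strictPreV y m}, preV s (L.foldr sqcup (fun _ => 0)) := by
        intro s hsS
        apply fold_le L (fun z hz => (hmemL z hz).2.1) s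
        rw [hL, Finset.mem_toList, Finset.mem_filter]
        exact ⟨Finset.mem_univ _, hsS⟩
      have hmw : preV m (L.foldr sqcup (fun _ => 0)) := hlub.2.2 _ hwM hub
      have hwj : (L.foldr sqcup (fun _ => 0)) j = 0 := by
        apply fold_zero
        intro z hz
        obtain ⟨hzM, hzs⟩ := hmemL z hz
        rcases hzs.1 j with h0 | h0
        · exact h0
        · exact absurd h0 (hno z hzM hzs)
      rcases hmw j with h0 | h0
      · exact hj h0
      · rw [h0] at hj; exact hj hwj
    have hzN : mu z ≤ N := Nat.lt_succ_iff.mp (lt_of_lt_of_le (mu_lt hz) hmu)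
    obtain ⟨p, hp, hpz, hpj⟩ := ih z hzM hzN j (by rw [hzj]; exact hj)
    exact ⟨p, hp, preV_trans hpz hz.1, by rw [hpj, hzj]⟩

lemma exists_max_lower {M : Set (Fin n → Fin (k + 1))} (hM : closedSet M)
    {x : Fin n → Fin (k + 1)} (hx : joinIrr M x) :
    ∃ u, u ∈ M ∧ strictPreV u x ∧ ∀ z ∈ M, strictPreV z x → preV z u := by
  obtain ⟨hxM, -, hnl⟩ := hx
  unfold isLUBof at hnl
  push_neg at hnl
  obtain ⟨w, hwM, hub, hxw⟩ := hnl hxM (fun s hs => hs.2.1)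
  refine ⟨sqcap x w, (hM.2 x hxM w hwM).1, ⟨sqcap_preV_left x w, ?_⟩, ?_⟩
  · intro he
    exact hxw (sqcap_eq_left he)
  · intro z hzM hzx
    exact preV_sqcap hzx.1 (hub z ⟨hzM, hzx⟩)

lemma Ji_facts {M : Set (Fin n → Fin (k + 1))} (hM : closedSet M)
    {x : Fin n → Fin (k + 1)} {i : Fin n} (hx : x ∈ Ji M i) :
    joinIrr M x ∧ x i ≠ 0 ∧
    (∀ z ∈ M, preV z x → z i ≠ 0 → z = x) ∧
    ∃ u, u ∈ M ∧ u i = 0 ∧ (∀ l, l ≠ i → u l = x l) := by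
  obtain ⟨hji, d, ⟨y, hyc, hd⟩, hsupp⟩ := hx
  obtain ⟨u, huM, hux, humax⟩ := exists_max_lower hM hji
  have hyu : y = u := by
    have h1 : preV y u := humax y hyc.1 hyc.2.1
    by_contra hne
    exact hyc.2.2 ⟨u, huM, ⟨h1, hne⟩, hux⟩
  have hdi : d i ≠ 0 := by
    have h : i ∈ supp d := by rw [hsupp]; exact rfl
    exact h
  have hcond : x i ≠ 0 ∧ y i = 0 := by
    by_cases h : x i ≠ 0 ∧ y i = 0
    · exact h
    · rw [hd i, if_neg h] at hdi
      exact absurd rfl hdi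
  have hui : u i = 0 := by rw [← hyu]; exact hcond.2
  refine ⟨hji, hcond.1, ?_, u, huM, hui, ?_⟩
  · intro z hzM hzx hzi
    by_contra hne
    rcases humax z hzM ⟨hzx, hne⟩ i with h0 | h0
    · exact hzi h0
    · rw [h0] at hzi; exact hzi hui
  · intro l hl
    have hdl : d l = 0 := by
      by_contra h
      have hmem : l ∈ supp d := h
      rw [hsupp] at hmem
      exact hl hmem
    have hul := hux.1 l
    by_cases hx0 : x l = 0
    · rcases hul with h0 | h0
      · rw [h0, hx0]
      · exact h0
    · have hcl : ¬ (x l ≠ 0 ∧ y l = 0) := by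
        intro hc
        rw [hd l, if_pos hc] at hdl
        exact hx0 hdl
      push_neg at hcl
      have hyl := hcl hx0
      rw [hyu] at hyl
      rcases hul with h0 | h0
      · exact absurd h0 hyl
      · exact h0

lemma recolor {M : Set (Fin n → Fin (k + 1))} (hM : closedSet M)
    (hnorm : normalizedSet M) :
    ∀ N : ℕ, ∀ p, joinIrr M p → mu p ≤ N → ∀ j, p j ≠ 0 →
      ∃ q, q ∈ Ji M j ∧ preV q p ∧ q j = p j := by
  intro N
  induction N with
  | zero =>
    intro p _ hmu j hj
    have := mu_pos hj
    omega
  | succ N ih =>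
    intro p hp hmu j hj
    obtain ⟨d, hdiff, i₀, hdi₀, huniq⟩ := hnorm.2 p hp
    by_cases hij : i₀ = j
    · subst hij
      refine ⟨p, ⟨hp, d, hdiff, ?_⟩, preV_refl p, rfl⟩
      ext l
      simp only [supp, Set.mem_setOf_eq, Set.mem_singleton_iff]
      constructor
      · exact huniq l
      · rintro rfl; exact hdi₀
    · obtain ⟨y, hyc, hd⟩ := hdiff
      have hdj : d j = 0 := by
        by_contra h
        exact hij (huniq j h).symm
      have hyj : y j = p j := by
        have hcl : ¬ (p j ≠ 0 ∧ y j = 0) := by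
          intro hc
          rw [hd j, if_pos hc] at hdj
          exact hj hdj
        push_neg at hcl
        rcases hyc.2.1.1 j with h0 | h0
        · exact absurd h0 (hcl hj)
        · exact h0
      have hyN : mu y ≤ N := Nat.lt_succ_iff.mp (lt_of_lt_of_le (mu_lt hyc.2.1) hmu)
      obtain ⟨z, hzji, hzy, hzj⟩ :=
        exists_ji hM hnorm.1 N y hyc.1 hyN j (by rw [hyj]; exact hj)
      obtain ⟨q, hq, hqz, hqj⟩ :=
        ih z hzji (le_trans (mu_le hzy) hyN) j (by rw [hzj, hyj]; exact hj)
      exact ⟨q, hq, preV_trans hqz (preV_trans hzy hyc.2.1.1), by rw [hqj, hzj, hyj]⟩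

end EP0Helpers

/-- (EP0): in a normalized `(⊓,⊔)`-closed set, a pair of distinct
join-irreducibles is minimally inconsistent iff both lie in the same part
`J_i`. -/
theorem minimally_inconsistent_iff_same_part (k n : ℕ) (hk : 0 < k) (hn : 0 < n)
    (M : Set (Fin n → Fin (k + 1))) (hM : closedSet M) (hnorm : normalizedSet M)
    (x y : Fin n → Fin (k + 1)) (hx : joinIrr M x) (hy : joinIrr M y)
    (hxy : x ≠ y) :
    minInc M x y ↔ ∃ i, x ∈ Ji M i ∧ y ∈ Ji M i := by
  constructor
  · rintro ⟨⟨j, hxj, hyj, hne⟩, hmin⟩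
    obtain ⟨x', hx'J, hx'x, hx'j⟩ := recolor hM hnorm (mu x) x hx le_rfl j hxj
    obtain ⟨y', hy'J, hy'y, hy'j⟩ := recolor hM hnorm (mu y) y hy le_rfl j hyj
    have hinc : incons x' y' :=
      ⟨j, by rw [hx'j]; exact hxj, by rw [hy'j]; exact hyj,
        by rw [hx'j, hy'j]; exact hne⟩
    obtain ⟨hex, hey⟩ := hmin x' y' hx'J.1 hy'J.1 hx'x hy'y hinc
    exact ⟨j, hex ▸ hx'J, hey ▸ hy'J⟩
  · rintro ⟨i, hxJ, hyJ⟩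
    obtain ⟨hjx, hxi, habsx, ux, huxM, huxi, hux⟩ := Ji_facts hM hxJ
    obtain ⟨hjy, hyi, habsy, uy, huyM, huyi, huy⟩ := Ji_facts hM hyJ
    have hxyi : x i ≠ y i := by
      intro he
      have hz := hM.2 x hjx.1 y hjy.1
      have h1 : sqcap x y = x :=
        habsx _ hz.1 (sqcap_preV_left x y)
          (by rw [sqcap_apply, if_pos he]; exact hxi)
      have h2 : sqcap x y = y :=
        habsy _ hz.1 (sqcap_preV_right x y)
          (by rw [sqcap_apply, if_pos he, he]; exact hyi)
      exact hxy (h1.symm.trans h2)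
    refine ⟨⟨i, hxi, hyi, hxyi⟩, ?_⟩
    intro x' y' hx' hy' hpx hpy hinc
    obtain ⟨j, h1, h2, h3⟩ := hinc
    have hx'j : x' j = x j := by
      rcases hpx j with h0 | h0
      · exact absurd h0 h1
      · exact h0
    have hy'j : y' j = y j := by
      rcases hpy j with h0 | h0
      · exact absurd h0 h2
      · exact h0
    have hxj : x j ≠ 0 := hx'j ▸ h1
    have hyj : y j ≠ 0 := hy'j ▸ h2
    have hxyj : x j ≠ y j := by rw [← hx'j, ← hy'j]; exact h3
    have hji : j = i := by
      by_contra hne'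
      have huyj : uy j = y j := huy j hne'
      have hzM : sqcup x uy ∈ M := (hM.2 x hjx.1 uy huyM).2
      have hwM : sqcap (sqcup x uy) x ∈ M := (hM.2 _ hzM x hjx.1).1
      have hzi : sqcup x uy i = x i := by
        rw [sqcup_apply, if_neg hxi, if_pos huyi]
      have hzj : sqcup x uy j = 0 := by
        rw [sqcup_apply, if_neg hxj, huyj, if_neg hyj, if_neg hxyj]
      have hwi : sqcap (sqcup x uy) x i ≠ 0 := by
        rw [sqcap_apply, if_pos hzi, hzi]
        exact hxi
      have hweq : sqcap (sqcup x uy) x = x :=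
        habsx _ hwM (sqcap_preV_right _ x) hwi
      have hwj : sqcap (sqcup x uy) x j = 0 := by
        rw [sqcap_apply, if_neg (by rw [hzj]; exact fun h => hxj h.symm)]
      rw [hweq] at hwj
      exact hxj hwj
    subst hji
    constructor
    · exact habsx x' hx'.1 hpx (by rw [hx'j]; exact hxj)
    · exact habsy y' hy'.1 hpy (by rw [hy'j]; exact hyj)
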